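/- arXiv:1810.04930 — 5 statements merged into one kernel-verified Lean document; each statement's English description precedes it below -/
import Mathlib

section
/- Let 0 < λ, λ ≤ c ≤ 2λ, c + λ < 1, c ≥ (1-λ)². Let t > 0 and a, b real with b ≥ a ≥ 1-c-λ. Then (a+ct)/(b+(1-λ)t) ≥ a/(b+ct), i.e. the intervals [a/(b+t), (a+ct)/(b+(1-λ)t)] and [a/(b+ct), (a+ct)/b] overlap (assuming all denominators positive). -/
theorem stmt_1 (l c a b t : ℝ) (hl : 0 < l) (h1 : l ≤ c) (h2 : c ≤ 2 * l)
    (h3 : c + l < 1) (h4 : c ≥ (1 - l) ^ 2) (ht : 0 < t)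
    (hba : b ≥ a) (ha : a ≥ 1 - c - l) (ha0 : 0 < a) (hb0 : 0 < b) :
    (a + c * t) / (b + (1 - l) * t) ≥ a / (b + c * t) := by
  have hc : 0 < c := lt_of_lt_of_le hl h1
  have hd1 : 0 < b + (1 - l) * t := by nlinarith
  have hd2 : 0 < b + c * t := by positivity
  rw [ge_iff_le, div_le_div_iff₀ hd2 hd1]
  have h5 : 2 * c + l - 1 ≥ 0 := by nlinarith [sq_nonneg (1 - l)]
  nlinarith [mul_nonneg (mul_nonneg ht.le hc.le) (sub_nonneg.2 hba),
    mul_nonneg (mul_nonneg ht.le ha0.le) h5, mul_nonneg (mul_nonneg ht.le ht.le) (mul_nonneg hc.le hc.le)]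
end

section
/- If (3-√5)/2 ≤ λ ≤ 1/2, then λ/(1-λ) ≥ 1-λ; consequently the intervals λᵏ·[1-λ, 1/(1-λ)] for k ∈ ℤ cover (0,∞). -/
theorem stmt_4 (l : ℝ) (h1 : (3 - Real.sqrt 5) / 2 ≤ l) (h2 : l ≤ 1 / 2) :
    l / (1 - l) ≥ 1 - l ∧
      Set.Ioi (0 : ℝ) ⊆ ⋃ k : ℤ, (fun y : ℝ => l ^ k * y) '' Set.Icc (1 - l) (1 / (1 - l)) := by
  have h5 : Real.sqrt 5 ^ 2 = 5 := Real.sq_sqrt (by norm_num)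
  have h5' : Real.sqrt 5 ≥ 2 := by nlinarith [Real.sqrt_nonneg 5]
  have h5'' : Real.sqrt 5 ≤ 3 := by nlinarith [Real.sqrt_nonneg 5]
  have hl0 : 0 < l := by nlinarith
  have hl1 : l < 1 := by linarith
  have h1l : 0 < 1 - l := by linarith
  have key : (1 - l) ^ 2 ≤ l := by nlinarith
  constructor
  · rw [ge_iff_le, le_div_iff₀ h1l]; nlinarith
  · intro x hx
    have hx0 : 0 < x := hx
    obtain ⟨n, hn1, hn2⟩ := exists_mem_Ioc_zpow (mul_pos hx0 h1l)
      (one_lt_inv_iff₀.mpr ⟨hl0, hl1⟩)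
    have hlkpos : ∀ m : ℤ, (0:ℝ) < l ^ m := fun m => zpow_pos hl0 m
    have e1 : (l⁻¹ : ℝ) ^ n = l ^ (-n) := by rw [inv_zpow, ← zpow_neg]
    have e2 : (l⁻¹ : ℝ) ^ (n + 1) = l ^ (-(n + 1)) := by rw [inv_zpow, ← zpow_neg]
    rw [e1] at hn1
    rw [e2] at hn2
    set k : ℤ := -(n + 1) with hk
    have hsplit : l ^ (-n) = l ^ k * l := by
      rw [hk, ← zpow_add_one₀ (ne_of_gt hl0)]
      ring_nf
    refine Set.mem_iUnion.mpr ⟨k, ⟨x / l ^ k, ⟨?_, ?_⟩, ?_⟩⟩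
    · -- 1 - l ≤ x / l^k
      rw [le_div_iff₀ (hlkpos k)]
      -- from hn1 : l^k * l < x * (1-l), and key
      have h' : l ^ k * l < x * (1 - l) := by rw [← hsplit]; exact hn1
      nlinarith [hlkpos k, mul_pos (hlkpos k) hl0]
    · -- x / l^k ≤ 1/(1-l)
      rw [div_le_div_iff₀ (hlkpos k) h1l]
      nlinarith [hn2]
    · field_simp
end

section
/- Suppose 0 < λ < 1, λ ≤ c ≤ 2λ, c + λ < 1, and c ≥ (1-λ)². Then the union ∪_{k≥0} λᵏ·[2(c-λ), 2] together with {0} equals [0,2]. In particular [2(c-λ), 2c] ∪ [c+1-2λ, 1+c] ∪ [2(1-λ), 2] = [2(c-λ), 2]. -/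
theorem stmt_9 (l c : ℝ) (hl : 0 < l) (hl1 : l < 1) (h1 : l ≤ c) (h2 : c ≤ 2 * l)
    (h3 : c + l < 1) (h4 : c ≥ (1 - l) ^ 2) :
    ({0} ∪ ⋃ k : ℕ, (fun y : ℝ => l ^ k * y) '' Set.Icc (2 * (c - l)) 2) =
        Set.Icc (0 : ℝ) 2 ∧
      Set.Icc (2 * (c - l)) (2 * c) ∪ Set.Icc (c + 1 - 2 * l) (1 + c) ∪
          Set.Icc (2 * (1 - l)) 2 =
        Set.Icc (2 * (c - l)) 2 := by
  constructor
  · ext x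
    simp only [Set.mem_union, Set.mem_singleton_iff, Set.mem_iUnion, Set.mem_image,
      Set.mem_Icc]
    constructor
    · rintro (rfl | ⟨k, y, ⟨hy1, hy2⟩, rfl⟩)
      · exact ⟨le_refl 0, by norm_num⟩
      · have hpk : (0:ℝ) < l ^ k := pow_pos hl k
        have hpk1 : l ^ k ≤ 1 := pow_le_one₀ hl.le hl1.le
        constructor
        · have : 0 ≤ y := by linarith
          positivity
        · calc l ^ k * y ≤ 1 * 2 := by
                apply mul_le_mul hpk1 hy2 (by linarith) (by norm_num)
             _ = 2 := by ring
    · rintro ⟨hx0, hx2⟩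
      rcases eq_or_lt_of_le hx0 with h | h
      · exact Or.inl h.symm
      · right
        -- find n with 2 * l^(n+1) < x
        have hex : ∃ n, 2 * l ^ (n + 1) < x := by
          obtain ⟨n, hn⟩ := exists_pow_lt_of_lt_one (by linarith : (0:ℝ) < x / 2) hl1
          refine ⟨n, ?_⟩
          have : l ^ (n + 1) ≤ l ^ n := pow_le_pow_of_le_one hl.le hl1.le (by omega)
          have := lt_of_le_of_lt this hn
          linarith
        classical
        set k := Nat.find hex with hk
        have hk1 : 2 * l ^ (k + 1) < x := Nat.find_spec hex
        have hxle : x ≤ 2 * l ^ k := by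
          rcases Nat.eq_zero_or_pos k with h0 | h0
          · rw [h0]; simpa using hx2
          · have := Nat.find_min hex (m := k - 1) (by omega)
            push_neg at this
            have : 2 * l ^ (k - 1 + 1) ≥ x := this
            have he : k - 1 + 1 = k := by omega
            rwa [he] at this
        have hpk : (0:ℝ) < l ^ k := pow_pos hl k
        refine ⟨k, x / l ^ k, ⟨?_, ?_⟩, ?_⟩
        · rw [le_div_iff₀ hpk]
          have : 2 * (c - l) * l ^ k ≤ 2 * l * l ^ k := by
            apply mul_le_mul_of_nonneg_right (by linarith) hpk.le
          calc 2 * (c - l) * l ^ k ≤ 2 * l * l ^ k := this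
            _ = 2 * l ^ (k + 1) := by ring
            _ ≤ x := hk1.le
        · rw [div_le_iff₀ hpk]; linarith
        · field_simp
  · ext x
    simp only [Set.mem_union, Set.mem_Icc]
    have hc2l : 1 ≤ c + 2 * l := by nlinarith
    constructor
    · rintro ((⟨a, b⟩ | ⟨a, b⟩) | ⟨a, b⟩) <;> constructor <;> linarith
    · rintro ⟨a, b⟩
      rcases le_or_gt x (2 * c) with h | h
      · exact Or.inl (Or.inl ⟨a, h⟩)
      · rcases le_or_gt x (1 + c) with h' | h'
        · exact Or.inl (Or.inr ⟨by linarith, h'⟩)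
        · exact Or.inr ⟨by linarith, b⟩
end

section
/- Let 0 < λ < 1, c > 0 with 2c + λ - 1 ≥ 0, and let t > 0, b ≥ a ≥ 0. Then √(a+ct) + √(b+ct) ≥ √a + √(b+(1-λ)t). -/
lemma sqrt_gap_mono (x y d : ℝ) (hx : 0 ≤ x) (hxy : x ≤ y) (hd : 0 ≤ d) :
    Real.sqrt x + Real.sqrt (y + d) ≤ Real.sqrt (x + d) + Real.sqrt y := by
  have hy : 0 ≤ y := le_trans hx hxy
  have h1 := Real.sq_sqrt hx
  have h2 := Real.sq_sqrt (by linarith : (0:ℝ) ≤ y + d)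
  have h3 := Real.sq_sqrt (by linarith : (0:ℝ) ≤ x + d)
  have h4 := Real.sq_sqrt hy
  have n1 := Real.sqrt_nonneg x
  have n2 := Real.sqrt_nonneg (y + d)
  have n3 := Real.sqrt_nonneg (x + d)
  have n4 := Real.sqrt_nonneg y
  have key : Real.sqrt x * Real.sqrt (y + d) ≤ Real.sqrt (x + d) * Real.sqrt y := by
    rw [← Real.sqrt_mul hx, ← Real.sqrt_mul (by linarith : (0:ℝ) ≤ x + d)]
    apply Real.sqrt_le_sqrt
    nlinarith
  nlinarith [sq_nonneg (Real.sqrt x + Real.sqrt (y + d) - Real.sqrt (x + d) - Real.sqrt y),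
    sq_nonneg (Real.sqrt x - Real.sqrt (x + d)), sq_nonneg (Real.sqrt (y + d) - Real.sqrt y)]

theorem stmt_11 (l c a b t : ℝ) (hl : 0 < l) (hl1 : l < 1) (hc : 0 < c)
    (h1 : 2 * c + l - 1 ≥ 0) (ht : 0 < t) (ha : 0 ≤ a) (hba : b ≥ a) :
    Real.sqrt (a + c * t) + Real.sqrt (b + c * t) ≥
      Real.sqrt a + Real.sqrt (b + (1 - l) * t) := by
  have hb : 0 ≤ b := le_trans ha hba
  by_cases hcl : 1 - l ≤ c
  · have h2 : Real.sqrt (b + (1 - l) * t) ≤ Real.sqrt (b + c * t) := by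
      apply Real.sqrt_le_sqrt; nlinarith
    have h3 : Real.sqrt a ≤ Real.sqrt (a + c * t) := by
      apply Real.sqrt_le_sqrt; nlinarith
    linarith
  · push_neg at hcl
    set d := (1 - l - c) * t with hdef
    have hd : 0 ≤ d := by nlinarith
    have hdc : d ≤ c * t := by nlinarith
    have step : Real.sqrt a + Real.sqrt ((b + c * t) + d) ≤
        Real.sqrt (a + d) + Real.sqrt (b + c * t) :=
      sqrt_gap_mono a (b + c * t) d ha (by nlinarith) hd
    have h2 : Real.sqrt (a + d) ≤ Real.sqrt (a + c * t) := by
      apply Real.sqrt_le_sqrt; linarith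
    have h3 : (b + c * t) + d = b + (1 - l) * t := by ring
    rw [h3] at step
    linarith
end

section
/- Let 0 < λ < 1, c > 0, t > 0, a, b ≥ 0 with b ≥ a, c + 2λ - 1 ≥ 0, and 8a(2λ+c-1) ≥ t(3 - 4λ - 4λc - c² - 2c). Then √(a+t) + √(b+ct) ≥ √(a+(1-λ)t) + √(b+(1-λ)t). -/
lemma sqrt_add_aux (p q r s : ℝ) (hp : 0 ≤ p) (hq : 0 ≤ q) (hr : 0 ≤ r) (hs : 0 ≤ s)
    (h : p + q + 2 * Real.sqrt (p * q) ≤ r + s + 2 * Real.sqrt (r * s)) :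
    Real.sqrt p + Real.sqrt q ≤ Real.sqrt r + Real.sqrt s := by
  have e1 : Real.sqrt p + Real.sqrt q = Real.sqrt (p + q + 2 * Real.sqrt (p * q)) := by
    rw [Real.sqrt_mul hp]
    rw [show p + q + 2 * (Real.sqrt p * Real.sqrt q) = (Real.sqrt p + Real.sqrt q) ^ 2 by
      nlinarith [Real.sq_sqrt hp, Real.sq_sqrt hq]]
    rw [Real.sqrt_sq (by positivity)]
  have e2 : Real.sqrt r + Real.sqrt s = Real.sqrt (r + s + 2 * Real.sqrt (r * s)) := by
    rw [Real.sqrt_mul hr]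
    rw [show r + s + 2 * (Real.sqrt r * Real.sqrt s) = (Real.sqrt r + Real.sqrt s) ^ 2 by
      nlinarith [Real.sq_sqrt hr, Real.sq_sqrt hs]]
    rw [Real.sqrt_sq (by positivity)]
  rw [e1, e2]
  exact Real.sqrt_le_sqrt h

theorem stmt_13 (l c a b t : ℝ) (hl : 0 < l) (hl1 : l < 1) (hc : 0 < c)
    (ht : 0 < t) (ha : 0 ≤ a) (hb : 0 ≤ b) (hba : b ≥ a)
    (h1 : c + 2 * l - 1 ≥ 0)
    (h2 : 8 * a * (2 * l + c - 1) ≥ t * (3 - 4 * l - 4 * l * c - c ^ 2 - 2 * c)) :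
    Real.sqrt (a + t) + Real.sqrt (b + c * t) ≥
      Real.sqrt (a + (1 - l) * t) + Real.sqrt (b + (1 - l) * t) := by
  have h1l : (0:ℝ) < 1 - l := by linarith
  have hA1 : 0 ≤ a + t := by linarith
  have hA2 : 0 ≤ a + (1 - l) * t := by nlinarith
  have hAc : 0 ≤ a + c * t := by nlinarith
  have hB1 : 0 ≤ b + (1 - l) * t := by nlinarith
  have hBc : 0 ≤ b + c * t := by nlinarith
  rcases le_or_gt (1 - l) c with hcl | hcl
  · have g1 : Real.sqrt (a + (1 - l) * t) ≤ Real.sqrt (a + t) := by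
      apply Real.sqrt_le_sqrt; nlinarith
    have g2 : Real.sqrt (b + (1 - l) * t) ≤ Real.sqrt (b + c * t) := by
      apply Real.sqrt_le_sqrt; nlinarith
    linarith
  · -- c < 1 - l
    -- key1 : 2 √(a+(1-l)t) ≤ √(a+t) + √(a+ct)
    have key1 : Real.sqrt (a + (1 - l) * t) + Real.sqrt (a + (1 - l) * t) ≤
        Real.sqrt (a + t) + Real.sqrt (a + c * t) := by
      apply sqrt_add_aux _ _ _ _ hA2 hA2 hA1 hAc
      have e : Real.sqrt ((a + (1 - l) * t) * (a + (1 - l) * t)) = a + (1 - l) * t :=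
        Real.sqrt_mul_self hA2
      rw [e]
      -- need : 4(a+(1-l)t) ≤ (a+t)+(a+ct) + 2√((a+t)(a+ct))
      have hmain : 2 * a + (3 - 4 * l - c) * t ≤ 2 * Real.sqrt ((a + t) * (a + c * t)) := by
        rcases le_or_gt (2 * a + (3 - 4 * l - c) * t) 0 with hm | hm
        · have := Real.sqrt_nonneg ((a + t) * (a + c * t))
          linarith
        · have hy : (0:ℝ) ≤ (2 * a + (3 - 4 * l - c) * t) / 2 := by linarith
          have hle : (2 * a + (3 - 4 * l - c) * t) / 2 ≤
              Real.sqrt ((a + t) * (a + c * t)) := by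
            rw [show (2 * a + (3 - 4 * l - c) * t) / 2 =
                Real.sqrt (((2 * a + (3 - 4 * l - c) * t) / 2) ^ 2) from
              (Real.sqrt_sq hy).symm]
            apply Real.sqrt_le_sqrt
            rcases le_or_gt 0 (3 - 4 * l - c) with hm2 | hm2
            · have hint1 : 0 ≤ t * (8 * a * (2 * l + c - 1) -
                  t * (3 - 4 * l - 4 * l * c - c ^ 2 - 2 * c)) :=
                mul_nonneg ht.le (by linarith)
              have hint2 : 0 ≤ (c + 2 * l - 1) * (3 - 4 * l - c) * t ^ 2 :=
                mul_nonneg (mul_nonneg h1 hm2) (sq_nonneg t)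
              nlinarith [hint1, hint2]
            · have h4 : 0 < -((3 - 4 * l - c) * t) := by nlinarith
              nlinarith [mul_pos h4 hm, mul_nonneg ha (mul_pos hc ht).le,
                mul_nonneg ha ht.le, mul_pos (mul_pos hc ht) ht]
          linarith
      nlinarith [hmain]
    -- key2 : √(a+ct) + √(b+(1-l)t) ≤ √(b+ct) + √(a+(1-l)t)
    have key2 : Real.sqrt (a + c * t) + Real.sqrt (b + (1 - l) * t) ≤
        Real.sqrt (b + c * t) + Real.sqrt (a + (1 - l) * t) := by
      apply sqrt_add_aux _ _ _ _ hAc hB1 hBc hA2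
      have hs : Real.sqrt ((a + c * t) * (b + (1 - l) * t)) ≤
          Real.sqrt ((b + c * t) * (a + (1 - l) * t)) := by
        apply Real.sqrt_le_sqrt
        nlinarith [mul_nonneg (mul_nonneg (sub_nonneg.2 hba) (by linarith : (0:ℝ) ≤ 1 - l - c)) ht.le]
      linarith
    linarith
end
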